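/- The complete graph K₅ on 5 vertices admits no string contact representation in ℝ³ in which every string is a B₁-string (L-shape). -/

import Mathlib

open Set

/-- Points of ℝ³, identified with triples of real numbers. -/
abbrev Pt3 : Type := Fin 3 → ℝ

/-- A vector is parallel to a coordinate axis if at most one of its
three coordinates is nonzero. -/
def AxisParallel (v : Pt3) : Prop := ∃ i : Fin 3, ∀ j : Fin 3, j ≠ i → v j = 0

/-- An axis-aligned string in ℝ³: a simple polygonal path `pts 0, pts 1, …, pts k`
(`k ≥ 1`) with consecutive points distinct, each difference parallel to a coordinate
axis, and the path non-self-intersecting (consecutive segments meet exactly at their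
common endpoint and non-consecutive segments are disjoint). -/
structure AAString where
  k : ℕ
  pts : Fin (k + 1) → Pt3
  k_pos : 1 ≤ k
  consec_ne : ∀ i : Fin k, pts i.castSucc ≠ pts i.succ
  axis : ∀ i : Fin k, AxisParallel (pts i.succ - pts i.castSucc)
  simple_consec : ∀ i j : Fin k, (i : ℕ) + 1 = (j : ℕ) →
    segment ℝ (pts i.castSucc) (pts i.succ) ∩ segment ℝ (pts j.castSucc) (pts j.succ)
      = {pts i.succ}
  simple_far : ∀ i j : Fin k, (i : ℕ) + 1 < (j : ℕ) →
    segment ℝ (pts i.castSucc) (pts i.succ) ∩ segment ℝ (pts j.castSucc) (pts j.succ) = ∅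

/-- The string, as a subset of ℝ³: the union of its closed segments. -/
def AAString.carrier (S : AAString) : Set Pt3 :=
  ⋃ i : Fin S.k, segment ℝ (S.pts i.castSucc) (S.pts i.succ)

/-- The two endpoints of the string. -/
def AAString.endpoints (S : AAString) : Set Pt3 := {S.pts 0, S.pts (Fin.last S.k)}

/-- The number of bends of the string: one less than its number of segments. -/
def AAString.bends (S : AAString) : ℕ := S.k - 1

/-- A string contact representation of a simple graph `G`: two distinct strings meet
only at endpoints of one of them, no point lies on three distinct strings, and two
strings intersect iff the corresponding vertices are adjacent. -/
def IsStringContactRep {V : Type*} (G : SimpleGraph V) (Ψ : V → AAString) : Prop :=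
  (∀ u v : V, u ≠ v → ∀ p ∈ (Ψ u).carrier ∩ (Ψ v).carrier,
      p ∈ (Ψ u).endpoints ∪ (Ψ v).endpoints) ∧
  (∀ u v w : V, u ≠ v → u ≠ w → v ≠ w →
      ∀ p : Pt3, ¬ (p ∈ (Ψ u).carrier ∧ p ∈ (Ψ v).carrier ∧ p ∈ (Ψ w).carrier)) ∧
  (∀ u v : V, u ≠ v → (((Ψ u).carrier ∩ (Ψ v).carrier).Nonempty ↔ G.Adj u v))

/-! ### Basic segment geometry -/

namespace K5

lemma seg_decomp {a b p : Pt3} (hp : p ∈ segment ℝ a b) :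
    ∃ u v : ℝ, 0 ≤ u ∧ 0 ≤ v ∧ u + v = 1 ∧ ∀ j, p j = u * a j + v * b j := by
  rcases hp with ⟨u, v, hu, hv, huv, rfl⟩
  exact ⟨u, v, hu, hv, huv, fun j => rfl⟩

lemma seg_coord_le {a b p : Pt3} (hp : p ∈ segment ℝ a b) (j : Fin 3) :
    p j ≤ max (a j) (b j) := by
  rcases seg_decomp hp with ⟨u, v, hu, hv, huv, hj⟩
  rw [hj]
  calc u * a j + v * b j ≤ u * (a j ⊔ b j) + v * (a j ⊔ b j) :=
        add_le_add (mul_le_mul_of_nonneg_left (le_max_left _ _) hu)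
          (mul_le_mul_of_nonneg_left (le_max_right _ _) hv)
    _ = a j ⊔ b j := by rw [← add_mul, huv, one_mul]

lemma seg_coord_ge {a b p : Pt3} (hp : p ∈ segment ℝ a b) (j : Fin 3) :
    min (a j) (b j) ≤ p j := by
  rcases seg_decomp hp with ⟨u, v, hu, hv, huv, hj⟩
  rw [hj]
  calc a j ⊓ b j = u * (a j ⊓ b j) + v * (a j ⊓ b j) := by rw [← add_mul, huv, one_mul]
    _ ≤ u * a j + v * b j :=
        add_le_add (mul_le_mul_of_nonneg_left (min_le_left _ _) hu)
          (mul_le_mul_of_nonneg_left (min_le_right _ _) hv)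

lemma seg_coord_const {a b p : Pt3} (hp : p ∈ segment ℝ a b) {j : Fin 3} (h : a j = b j) :
    p j = a j := by
  rcases seg_decomp hp with ⟨u, v, hu, hv, huv, hj⟩
  rw [hj, ← h, ← add_mul, huv, one_mul]

lemma seg_eq_endpoint {a b p : Pt3} (hp : p ∈ segment ℝ a b) {i : Fin 3}
    (hne : a i ≠ b i) (hpi : p i = a i) : p = a := by
  rcases seg_decomp hp with ⟨u, v, hu, hv, huv, hj⟩
  have hu1 : u = 1 - v := by linarith
  have h1 : u * a i + v * b i = a i := by rw [← hj]; exact hpi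
  rw [hu1] at h1
  have h2 : v * (b i - a i) = 0 := by ring_nf; ring_nf at h1; linarith
  have hv0 : v = 0 := by
    rcases mul_eq_zero.mp h2 with h | h
    · exact h
    · exact absurd (by linarith : a i = b i) hne
  funext j
  rw [hj j, hv0, hu1, hv0]
  ring

lemma mem_seg_of_coord {a b : Pt3} {i : Fin 3} (hconst : ∀ j, j ≠ i → a j = b j)
    {x : ℝ} (hx : min (a i) (b i) ≤ x) (hx' : x ≤ max (a i) (b i)) :
    Function.update a i x ∈ segment ℝ a b := by
  rcases eq_or_ne (a i) (b i) with h | h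
  · have hxa : x = a i := by
      rw [← h] at hx hx'; simp at hx hx'; linarith
    have hupd : Function.update a i x = a := by
      funext j; rcases eq_or_ne j i with rfl | hj
      · simp [hxa]
      · simp [Function.update_of_ne hj]
    rw [hupd]; exact left_mem_segment _ _ _
  · set t : ℝ := (x - a i) / (b i - a i) with ht
    have hbne : b i - a i ≠ 0 := fun hc => h (by linarith)
    have h01 : 0 ≤ t ∧ t ≤ 1 := by
      rcases lt_or_gt_of_ne h with hlt | hlt
      · have hmin : min (a i) (b i) = a i := min_eq_left hlt.le
        have hmax : max (a i) (b i) = b i := max_eq_right hlt.le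
        rw [hmin] at hx; rw [hmax] at hx'
        exact ⟨div_nonneg (by linarith) (by linarith),
          by rw [div_le_one (by linarith)]; linarith⟩
      · have hmin : min (a i) (b i) = b i := min_eq_right hlt.le
        have hmax : max (a i) (b i) = a i := max_eq_left hlt.le
        rw [hmin] at hx; rw [hmax] at hx'
        refine ⟨div_nonneg_iff.mpr (Or.inr ⟨by linarith, by linarith⟩), ?_⟩
        rw [div_le_one_iff]
        exact Or.inr (Or.inr ⟨by linarith, by linarith⟩)
    refine ⟨1 - t, t, by linarith [h01.1, h01.2], h01.1, by ring, ?_⟩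
    funext j
    have hcoord : ((1 - t) • a + t • b) j = (1 - t) * a j + t * b j := rfl
    rcases eq_or_ne j i with rfl | hj
    · rw [hcoord, Function.update_self, ht]
      field_simp
      ring
    · rw [hcoord, Function.update_of_ne hj, ← hconst j hj]
      ring

lemma seg_infinite {p q : Pt3} (h : p ≠ q) : (segment ℝ p q).Infinite := by
  have hinj : Set.InjOn (fun θ : ℝ => (1 - θ) • p + θ • q) (Set.Icc 0 1) := by
    intro s hs t ht hst
    by_contra hne
    apply h
    funext j
    have hj := congrFun hst j
    simp only [Pi.add_apply, Pi.smul_apply, smul_eq_mul] at hj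
    have hst' : (t - s) * (q j - p j) = 0 := by nlinarith
    rcases mul_eq_zero.mp hst' with h1 | h2
    · exact absurd (by linarith : s = t) hne
    · linarith
  rw [segment_eq_image ℝ p q]
  exact (Set.infinite_coe_iff.mp (Set.Icc.infinite (by norm_num : (0:ℝ) < 1))).image hinj

lemma overlap_aux {p q r : Pt3} {i : Fin 3}
    (hq : ∀ j, j ≠ i → p j = q j) (hr : ∀ j, j ≠ i → p j = r j)
    (hs : (q i - p i) * (r i - p i) > 0) (hle : |q i - p i| ≤ |r i - p i|) :
    (segment ℝ p q ∩ segment ℝ p r).Infinite := by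
  have hqp : q i ≠ p i := by
    intro hc; rw [hc] at hs; simp at hs
  have hq' : q ∈ segment ℝ p r := by
    have hupd : q = Function.update p i (q i) := by
      funext j; rcases eq_or_ne j i with rfl | hj
      · simp
      · simp [Function.update_of_ne hj, ← hq j hj]
    rw [hupd]
    apply mem_seg_of_coord hr
    · rcases mul_pos_iff.mp hs with ⟨h1, h2⟩ | ⟨h1, h2⟩
      · calc min (p i) (r i) ≤ p i := min_le_left _ _
          _ ≤ q i := by linarith
      · rw [abs_of_nonpos (by linarith), abs_of_nonpos (by linarith)] at hle
        have : r i ≤ q i := by linarith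
        calc min (p i) (r i) ≤ r i := min_le_right _ _
          _ ≤ q i := this
    · rcases mul_pos_iff.mp hs with ⟨h1, h2⟩ | ⟨h1, h2⟩
      · rw [abs_of_nonneg (by linarith), abs_of_nonneg (by linarith)] at hle
        calc q i ≤ r i := by linarith
          _ ≤ max (p i) (r i) := le_max_right _ _
      · calc q i ≤ p i := by linarith
          _ ≤ max (p i) (r i) := le_max_left _ _
  have hsub : segment ℝ p q ⊆ segment ℝ p q ∩ segment ℝ p r := by
    intro z hz
    exact ⟨hz, (convex_segment p r).segment_subset (left_mem_segment _ _ _) hq' hz⟩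
  have hne : p ≠ q := by
    intro hc; exact hqp (by rw [hc])
  exact (seg_infinite hne).mono hsub

lemma overlap_same_side {p q r : Pt3} {i : Fin 3}
    (hq : ∀ j, j ≠ i → p j = q j) (hr : ∀ j, j ≠ i → p j = r j)
    (hs : (q i - p i) * (r i - p i) > 0) :
    (segment ℝ p q ∩ segment ℝ p r).Infinite := by
  rcases le_total |q i - p i| |r i - p i| with hle | hle
  · exact overlap_aux hq hr hs hle
  · have := overlap_aux hr hq (by nlinarith) hle
    rw [Set.inter_comm] at this
    exact this

/-- `t` interior to a collinear host segment: infinite intersection. -/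
lemma overlap_interior {m t A B : Pt3} {i : Fin 3}
    (hmt : ∀ j, j ≠ i → t j = m j) (hAB : ∀ j, j ≠ i → A j = B j)
    (hABi : A i ≠ B i) (ht : t ∈ segment ℝ A B)
    (hm : m i ≠ t i) (hA : t ≠ A) (hB : t ≠ B) :
    (segment ℝ m t ∩ segment ℝ A B).Infinite := by
  have htA : t i ≠ A i := by
    intro hc; exact hA (seg_eq_endpoint ht hABi hc)
  have htB : t i ≠ B i := by
    intro hc
    exact hB (seg_eq_endpoint (by rw [segment_symm] at ht; exact ht) (Ne.symm hABi) hc)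
  -- t j = A j for j ≠ i
  have htj : ∀ j, j ≠ i → t j = A j := fun j hj => seg_coord_const ht (hAB j hj)
  -- pick X among A, B on the same side as m
  have hX : ∃ X : Pt3, X ∈ segment ℝ A B ∧ (∀ j, j ≠ i → t j = X j) ∧
      (X i - t i) * (m i - t i) > 0 := by
    rcases lt_or_gt_of_ne hm with hmlt | hmgt
    · -- m below t: pick the endpoint with smaller coord
      rcases lt_or_gt_of_ne htA with h1 | h1
      · -- t i < A i, so B i < t i
        have hBlt : B i < t i := by
          rcases lt_or_gt_of_ne htB with h2 | h2
          · exfalso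
            have := seg_coord_ge ht i
            rcases le_total (A i) (B i) with h3 | h3
            · rw [min_eq_left h3] at this; linarith
            · rw [min_eq_right h3] at this; linarith
          · exact h2
        exact ⟨B, right_mem_segment _ _ _,
          fun j hj => by rw [htj j hj, hAB j hj], by nlinarith⟩
      · exact ⟨A, left_mem_segment _ _ _, htj, by nlinarith⟩
    · rcases lt_or_gt_of_ne htA with h1 | h1
      · exact ⟨A, left_mem_segment _ _ _, htj, by nlinarith⟩
      · have hBgt : t i < B i := by
          rcases lt_or_gt_of_ne htB with h2 | h2
          · exact h2
          · exfalso
            have := seg_coord_le ht i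
            rcases le_total (A i) (B i) with h3 | h3
            · rw [max_eq_right h3] at this; linarith
            · rw [max_eq_left h3] at this; linarith
        exact ⟨B, right_mem_segment _ _ _,
          fun j hj => by rw [htj j hj, hAB j hj], by nlinarith⟩
  rcases hX with ⟨X, hXmem, hXj, hXside⟩
  have hinf : (segment ℝ t m ∩ segment ℝ t X).Infinite :=
    overlap_same_side hmt hXj (by nlinarith)
  apply hinf.mono
  intro z hz
  refine ⟨by rw [segment_symm]; exact hz.1, ?_⟩
  exact (convex_segment A B).segment_subset ht hXmem hz.2

end K5

/-! ### String-level helpers -/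

namespace K5

lemma pts_congr (S : AAString) {i j : Fin (S.k+1)} (h : (i:ℕ) = (j:ℕ)) :
    S.pts i = S.pts j := congrArg S.pts (Fin.ext h)

lemma mem_carrier_iff {S : AAString} {p : Pt3} :
    p ∈ S.carrier ↔ ∃ i : Fin S.k, p ∈ segment ℝ (S.pts i.castSucc) (S.pts i.succ) :=
  Set.mem_iUnion

lemma seg_sub_carrier (S : AAString) (i : Fin S.k) :
    segment ℝ (S.pts i.castSucc) (S.pts i.succ) ⊆ S.carrier :=
  Set.subset_iUnion (fun i : Fin S.k => segment ℝ (S.pts i.castSucc) (S.pts i.succ)) i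

lemma mem_endpoints_iff {S : AAString} {p : Pt3} :
    p ∈ S.endpoints ↔ p = S.pts 0 ∨ p = S.pts (Fin.last S.k) := by
  simp [AAString.endpoints]

lemma axis_exists (S : AAString) (i : Fin S.k) :
    ∃ a : Fin 3, (∀ j, j ≠ a → S.pts i.castSucc j = S.pts i.succ j) ∧
      S.pts i.castSucc a ≠ S.pts i.succ a := by
  obtain ⟨a, ha⟩ := S.axis i
  refine ⟨a, fun j hj => ?_, fun hc => S.consec_ne i ?_⟩
  · have h2 : S.pts i.succ j - S.pts i.castSucc j = 0 := by simpa using ha j hj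
    linarith
  · funext j
    rcases eq_or_ne j a with rfl | hj
    · exact hc
    · have h2 : S.pts i.succ j - S.pts i.castSucc j = 0 := by simpa using ha j hj
      linarith

lemma pts0_mem (S : AAString) : S.pts 0 ∈ S.carrier := by
  apply (seg_sub_carrier S ⟨0, S.k_pos⟩)
  have h : S.pts (Fin.castSucc ⟨0, S.k_pos⟩) = S.pts 0 := pts_congr S (by simp)
  rw [← h]
  exact left_mem_segment _ _ _

lemma ptsLast_mem (S : AAString) : S.pts (Fin.last S.k) ∈ S.carrier := by
  apply (seg_sub_carrier S ⟨S.k - 1, by have := S.k_pos; omega⟩)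
  have h : S.pts (Fin.succ ⟨S.k - 1, by have := S.k_pos; omega⟩) = S.pts (Fin.last S.k) := by
    apply pts_congr S
    have := S.k_pos
    simp [Fin.last]
    omega
  rw [← h]
  exact right_mem_segment _ _ _

/-- tip `t` together with its adjacent path point `m`. -/
def TipMate (S : AAString) (t m : Pt3) : Prop :=
  (t = S.pts 0 ∧ m = S.pts ⟨1, Nat.succ_lt_succ S.k_pos⟩) ∨
  (t = S.pts (Fin.last S.k) ∧ m = S.pts ⟨S.k - 1, by omega⟩)

lemma TipMate.mem_endpoints {S : AAString} {t m : Pt3} (h : TipMate S t m) :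
    t ∈ S.endpoints := by
  rcases h with ⟨h1, _⟩ | ⟨h1, _⟩ <;> rw [mem_endpoints_iff]
  · exact Or.inl h1
  · exact Or.inr h1

lemma TipMate.seg_sub {S : AAString} {t m : Pt3} (h : TipMate S t m) :
    segment ℝ m t ⊆ S.carrier := by
  rcases h with ⟨h1, h2⟩ | ⟨h1, h2⟩
  · intro z hz
    apply seg_sub_carrier S ⟨0, S.k_pos⟩
    have e1 : S.pts (Fin.castSucc ⟨0, S.k_pos⟩) = t := by rw [h1]; exact pts_congr S (by simp)
    have e2 : S.pts (Fin.succ ⟨0, S.k_pos⟩) = m := by rw [h2]; exact pts_congr S (by simp)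
    rw [e1, e2]
    rw [segment_symm] at hz; exact hz
  · intro z hz
    apply seg_sub_carrier S ⟨S.k - 1, by have := S.k_pos; omega⟩
    have e1 : S.pts (Fin.castSucc ⟨S.k - 1, by have := S.k_pos; omega⟩) = m := by
      rw [h2]; exact pts_congr S (by simp)
    have e2 : S.pts (Fin.succ ⟨S.k - 1, by have := S.k_pos; omega⟩) = t := by
      rw [h1]; apply pts_congr S; have := S.k_pos; simp [Fin.last]; omega
    rw [e1, e2]; exact hz

lemma TipMate.axis {S : AAString} {t m : Pt3} (h : TipMate S t m) :
    ∃ a : Fin 3, (∀ j, j ≠ a → t j = m j) ∧ t a ≠ m a := by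
  rcases h with ⟨h1, h2⟩ | ⟨h1, h2⟩
  · obtain ⟨a, hc, hn⟩ := axis_exists S ⟨0, S.k_pos⟩
    have e1 : S.pts (Fin.castSucc ⟨0, S.k_pos⟩) = t := by rw [h1]; exact pts_congr S (by simp)
    have e2 : S.pts (Fin.succ ⟨0, S.k_pos⟩) = m := by rw [h2]; exact pts_congr S (by simp)
    rw [e1, e2] at hc hn
    exact ⟨a, hc, hn⟩
  · obtain ⟨a, hc, hn⟩ := axis_exists S ⟨S.k - 1, by have := S.k_pos; omega⟩
    have e1 : S.pts (Fin.castSucc ⟨S.k - 1, by have := S.k_pos; omega⟩) = m := by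
      rw [h2]; exact pts_congr S (by simp)
    have e2 : S.pts (Fin.succ ⟨S.k - 1, by have := S.k_pos; omega⟩) = t := by
      rw [h1]; apply pts_congr S; have := S.k_pos; simp [Fin.last]; omega
    rw [e1, e2] at hc hn
    exact ⟨a, fun j hj => (hc j hj).symm, Ne.symm hn⟩

lemma TipMate.ne {S : AAString} {t m : Pt3} (h : TipMate S t m) : t ≠ m := by
  obtain ⟨a, _, hn⟩ := h.axis
  intro hc; rw [hc] at hn; exact hn rfl

lemma TipMate.tip_mem {S : AAString} {t m : Pt3} (h : TipMate S t m) : t ∈ S.carrier := by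
  rcases h with ⟨h1, _⟩ | ⟨h1, _⟩
  · rw [h1]; exact pts0_mem S
  · rw [h1]; exact ptsLast_mem S

/-- The local structure at a path point that is not an endpoint of a `≤ 2`-segment
string: it is the middle point of a 2-segment string. -/
lemma middle_struct {S : AAString} (hk : S.k ≤ 2) {t : Pt3}
    (hpt : ∃ i : Fin S.k, t = S.pts i.castSucc ∨ t = S.pts i.succ)
    (hne : t ∉ S.endpoints) :
    ∃ (h2 : S.k = 2), t = S.pts ⟨1, by omega⟩ ∧
      TipMate S (S.pts 0) t ∧ TipMate S (S.pts (Fin.last S.k)) t ∧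
      segment ℝ (S.pts 0) t ∩ segment ℝ t (S.pts (Fin.last S.k)) = {t} ∧
      (∃ a : Fin 3, (∀ j, j ≠ a → S.pts 0 j = t j) ∧ S.pts 0 a ≠ t a) ∧
      (∃ a : Fin 3, (∀ j, j ≠ a → t j = S.pts (Fin.last S.k) j) ∧
        t a ≠ S.pts (Fin.last S.k) a) ∧
      segment ℝ (S.pts 0) t ⊆ S.carrier ∧
      segment ℝ t (S.pts (Fin.last S.k)) ⊆ S.carrier := by
  rw [mem_endpoints_iff] at hne
  push_neg at hne
  obtain ⟨hne0, hneL⟩ := hne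
  obtain ⟨i, hi⟩ := hpt
  have hkpos := S.k_pos
  have h2 : S.k = 2 := by
    rcases Nat.lt_or_ge S.k 2 with h | h
    · exfalso
      have hk1 : S.k = 1 := by omega
      have hival : (i : ℕ) = 0 := by omega
      rcases hi with hi | hi
      · exact hne0 (by rw [hi]; exact pts_congr S (by simp [hival]))
      · exact hneL (by rw [hi]; apply pts_congr S; simp [Fin.last, hival, hk1])
    · omega
  have htB : t = S.pts ⟨1, by omega⟩ := by
    have hival : (i : ℕ) = 0 ∨ (i : ℕ) = 1 := by omega
    rcases hi with hi | hi
    · rcases hival with h | h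
      · exact absurd (by rw [hi]; exact pts_congr S (by simp [h])) hne0
      · rw [hi]; exact pts_congr S (by simp [h])
    · rcases hival with h | h
      · rw [hi]; exact pts_congr S (by simp [h])
      · exact absurd (by rw [hi]; apply pts_congr S; simp [Fin.last, h, h2]) hneL
  set i0 : Fin S.k := ⟨0, by omega⟩ with hi0
  set i1 : Fin S.k := ⟨1, by omega⟩ with hi1
  have e00 : S.pts (Fin.castSucc i0) = S.pts 0 := pts_congr S (by simp [hi0])
  have e01 : S.pts (Fin.succ i0) = t := by rw [htB]; exact pts_congr S (by simp [hi0])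
  have e10 : S.pts (Fin.castSucc i1) = t := by rw [htB]; exact pts_congr S (by simp [hi1])
  have e11 : S.pts (Fin.succ i1) = S.pts (Fin.last S.k) := by
    apply pts_congr S; simp [hi1, Fin.last, h2]
  have hcons := S.simple_consec i0 i1 (by simp [hi0, hi1])
  rw [e00, e01, e10, e11] at hcons
  have hax0 := axis_exists S i0
  rw [e00, e01] at hax0
  have hax1 := axis_exists S i1
  rw [e10, e11] at hax1
  have hsub0 := seg_sub_carrier S i0
  rw [e00, e01] at hsub0
  have hsub1 := seg_sub_carrier S i1
  rw [e10, e11] at hsub1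
  refine ⟨h2, htB, ?_, ?_, hcons, hax0, hax1, hsub0, hsub1⟩
  · exact Or.inl ⟨rfl, htB⟩
  · exact Or.inr ⟨rfl, by rw [htB]; exact pts_congr S (by simp [h2])⟩

end K5

/-! ### Part A : the tight counting structure -/

namespace K5

lemma partA_fin {Ψ : Fin 5 → AAString} (hrep : IsStringContactRep (⊤ : SimpleGraph (Fin 5)) Ψ)
    {u v : Fin 5} (huv : u ≠ v) : ((Ψ u).carrier ∩ (Ψ v).carrier).Finite := by
  obtain ⟨h1, _, _⟩ := hrep
  have hsub : (Ψ u).carrier ∩ (Ψ v).carrier ⊆ (Ψ u).endpoints ∪ (Ψ v).endpoints :=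
    fun p hp => h1 u v huv p hp
  have hfin : ∀ w : Fin 5, (Ψ w).endpoints.Finite := by
    intro w
    exact (Set.finite_singleton _).insert _
  exact ((hfin u).union (hfin v)).subset hsub

lemma partA_land {Ψ : Fin 5 → AAString}
    (hrep : IsStringContactRep (⊤ : SimpleGraph (Fin 5)) Ψ) :
    ∀ (v : Fin 5) (t : Pt3), t ∈ (Ψ v).endpoints →
      ∃ w, w ≠ v ∧ t ∈ (Ψ w).carrier ∧ t ∉ (Ψ w).endpoints := by
  classical
  obtain ⟨h1, h2, h3⟩ := hrep
  have hadj : ∀ u v : Fin 5, u ≠ v → ((Ψ u).carrier ∩ (Ψ v).carrier).Nonempty := by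
    intro u v h
    exact (h3 u v h).mpr (by simpa using h)
  set pt : Fin 5 → Fin 5 → Pt3 := fun u v =>
    if h : ((Ψ u).carrier ∩ (Ψ v).carrier).Nonempty then h.choose else 0 with hpt
  have hptmem : ∀ u v : Fin 5, u ≠ v → pt u v ∈ (Ψ u).carrier ∩ (Ψ v).carrier := by
    intro u v huv
    have h := hadj u v huv
    simp only [hpt, dif_pos h]
    exact h.choose_spec
  set spt : Fin 5 × Bool → Pt3 := fun s =>
    if s.2 then (Ψ s.1).pts 0 else (Ψ s.1).pts (Fin.last _) with hspt
  set F : Fin 5 × Fin 5 → Fin 5 × Bool := fun e =>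
    if pt e.1 e.2 = (Ψ e.1).pts 0 then (e.1, true)
    else if pt e.1 e.2 = (Ψ e.1).pts (Fin.last _) then (e.1, false)
    else if pt e.1 e.2 = (Ψ e.2).pts 0 then (e.2, true)
    else (e.2, false) with hF
  have hFspec : ∀ e : Fin 5 × Fin 5, e.1 ≠ e.2 →
      ((F e).1 = e.1 ∨ (F e).1 = e.2) ∧ spt (F e) = pt e.1 e.2 := by
    intro e he
    have hmem := hptmem e.1 e.2 he
    have hend := h1 e.1 e.2 he (pt e.1 e.2) hmem
    simp only [Set.mem_union, mem_endpoints_iff] at hend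
    by_cases c1 : pt e.1 e.2 = (Ψ e.1).pts 0
    · simp only [hF, if_pos c1]; exact ⟨by simp, by simp [hspt, c1]⟩
    · by_cases c2 : pt e.1 e.2 = (Ψ e.1).pts (Fin.last _)
      · simp only [hF, if_neg c1, if_pos c2]; exact ⟨by simp, by simp [hspt, c2]⟩
      · by_cases c3 : pt e.1 e.2 = (Ψ e.2).pts 0
        · simp only [hF, if_neg c1, if_neg c2, if_pos c3]
          exact ⟨by simp, by simp [hspt, c3]⟩
        · have c4 : pt e.1 e.2 = (Ψ e.2).pts (Fin.last _) := by tauto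
          simp only [hF, if_neg c1, if_neg c2, if_neg c3]
          exact ⟨by simp, by simp [hspt, c4]⟩
  set E : Finset (Fin 5 × Fin 5) := Finset.univ.filter (fun e => e.1 < e.2) with hE
  have hcardE : E.card = 10 := by decide
  have hEne : ∀ e ∈ E, e.1 ≠ e.2 := by
    intro e he
    simp only [hE, Finset.mem_filter] at he
    exact ne_of_lt he.2
  -- injectivity
  have hinj : Set.InjOn F E := by
    intro e he e' he' hFe
    simp only [Finset.coe_filter, Set.mem_setOf_eq, hE, Finset.mem_univ, true_and] at he he'
    have hee : e.1 ≠ e.2 := ne_of_lt he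
    have hee' : e'.1 ≠ e'.2 := ne_of_lt he'
    obtain ⟨hw, hsptF⟩ := hFspec e hee
    obtain ⟨hw', hsptF'⟩ := hFspec e' hee'
    have hpt_eq : pt e.1 e.2 = pt e'.1 e'.2 := by
      rw [← hsptF, ← hsptF', hFe]
    set p := pt e.1 e.2 with hp
    have hmem := hptmem e.1 e.2 hee
    have hmem' := hptmem e'.1 e'.2 hee'
    rw [← hpt_eq] at hmem'
    have key : ∀ x : Fin 5, p ∈ (Ψ x).carrier → x = e'.1 ∨ x = e'.2 := by
      intro x hx
      by_contra hc
      push_neg at hc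
      exact h2 x e'.1 e'.2 hc.1 hc.2 hee' p ⟨hx, hmem'.1, hmem'.2⟩
    rcases key e.1 hmem.1 with k1 | k1 <;> rcases key e.2 hmem.2 with k2 | k2
    · exact absurd (k1.trans k2.symm) hee
    · exact Prod.ext k1 k2
    · exfalso
      have h6 : e.1 < e.2 := he
      rw [k1, k2] at h6
      exact absurd (he'.trans h6) (lt_irrefl _)
    · exact absurd (k1.trans k2.symm) hee
  -- surjectivity
  have himg : E.image F = Finset.univ := by
    apply Finset.eq_of_subset_of_card_le (Finset.subset_univ _)
    rw [Finset.card_image_of_injOn hinj, hcardE]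
    decide
  have hsurj : ∀ s : Fin 5 × Bool, ∃ e ∈ E, F e = s := by
    intro s
    have hs : s ∈ E.image F := by rw [himg]; exact Finset.mem_univ s
    simpa using Finset.mem_image.mp hs
  have hlt : ∀ e ∈ E, e.1 < e.2 := by
    intro e he
    simp only [hE, Finset.mem_filter] at he
    exact he.2
  -- main conclusion
  intro v t ht
  rw [mem_endpoints_iff] at ht
  have hslot : ∃ b : Bool, spt (v, b) = t := by
    rcases ht with h | h
    · exact ⟨true, by simp [hspt, h]⟩
    · exact ⟨false, by simp [hspt, h]⟩
  obtain ⟨b, hb⟩ := hslot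
  obtain ⟨e, heE, hFe⟩ := hsurj (v, b)
  have hee : e.1 ≠ e.2 := hEne e heE
  obtain ⟨hw, hsptF⟩ := hFspec e hee
  rw [hFe] at hw hsptF
  have htpt : t = pt e.1 e.2 := by rw [← hb, hsptF]
  have hmem := hptmem e.1 e.2 hee
  rw [← htpt] at hmem
  have final : ∀ w : Fin 5, w ≠ v → t ∈ (Ψ w).carrier → t ∈ (Ψ v).carrier →
      ((e.1 = v ∧ e.2 = w) ∨ (e.1 = w ∧ e.2 = v)) →
      t ∉ (Ψ w).endpoints := by
    intro w hwv hwmem htv hconf hc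
    rw [mem_endpoints_iff] at hc
    have hslot' : ∃ b' : Bool, spt (w, b') = t := by
      rcases hc with h | h
      · exact ⟨true, by simp [hspt, h]⟩
      · exact ⟨false, by simp [hspt, h]⟩
    obtain ⟨b', hb'⟩ := hslot'
    obtain ⟨e', he'E, hFe'⟩ := hsurj (w, b')
    have hee' : e'.1 ≠ e'.2 := hEne e' he'E
    obtain ⟨hw', hsptF'⟩ := hFspec e' hee'
    rw [hFe'] at hw' hsptF'
    have htpt' : t = pt e'.1 e'.2 := by rw [← hb', hsptF']
    have hmem' := hptmem e'.1 e'.2 hee'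
    rw [← htpt'] at hmem'
    have hvw : v ≠ w := hwv.symm
    have hconf' : (e'.1 = w ∧ e'.2 = v) ∨ (e'.1 = v ∧ e'.2 = w) := by
      rcases hw' with h' | h'
      · have h'' : w = e'.1 := h'
        left
        refine ⟨h''.symm, ?_⟩
        by_contra hc2
        have hxw : e'.2 ≠ w := by rw [h'']; exact hee'.symm
        exact h2 e'.2 v w hc2 hxw hvw t ⟨hmem'.2, htv, hwmem⟩
      · have h'' : w = e'.2 := h'
        right
        refine ⟨?_, h''.symm⟩
        by_contra hc2
        have hxw : e'.1 ≠ w := by rw [h'']; exact hee'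
        exact h2 e'.1 v w hc2 hxw hvw t ⟨hmem'.1, htv, hwmem⟩
    have hltE := hlt e heE
    have hltE' := hlt e' he'E
    have heq : e = e' := by
      rcases hconf with ⟨p1, p2⟩ | ⟨p1, p2⟩ <;> rcases hconf' with ⟨q1, q2⟩ | ⟨q1, q2⟩
      · exfalso
        rw [p1, p2] at hltE
        rw [q1, q2] at hltE'
        exact absurd (hltE.trans hltE') (lt_irrefl _)
      · exact Prod.ext (by rw [p1, q1]) (by rw [p2, q2])
      · exact Prod.ext (by rw [p1, q1]) (by rw [p2, q2])
      · exfalso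
        rw [p1, p2] at hltE
        rw [q1, q2] at hltE'
        exact absurd (hltE.trans hltE') (lt_irrefl _)
    rw [heq, hFe'] at hFe
    exact hwv (by simpa using congrArg Prod.fst hFe)
  rcases hw with h | h
  · have h0 : v = e.1 := h
    have hwv : e.2 ≠ v := by rw [h0]; exact hee.symm
    exact ⟨e.2, hwv, hmem.2, final e.2 hwv hmem.2 (by rw [h0]; exact hmem.1)
      (Or.inl ⟨h0.symm, rfl⟩)⟩
  · have h0 : v = e.2 := h
    have hwv : e.1 ≠ v := by rw [h0]; exact hee
    exact ⟨e.1, hwv, hmem.1, final e.1 hwv hmem.1 (by rw [h0]; exact hmem.2)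
      (Or.inr ⟨rfl, h0.symm⟩)⟩

end K5

/-! ### The sweep argument: definitions and host analysis -/

namespace K5

def _root_.AAString.fst (S : AAString) : Pt3 := S.pts 0
def _root_.AAString.lst (S : AAString) : Pt3 := S.pts (Fin.last S.k)
def _root_.AAString.mid (S : AAString) : Pt3 := S.pts ⟨1, Nat.succ_lt_succ S.k_pos⟩

/-- `A B` span a nondegenerate segment parallel to axis `a`. -/
def IsSegA (A B : Pt3) (a : Fin 3) : Prop := (∀ j, j ≠ a → A j = B j) ∧ A a ≠ B a

/-- An L corner with axes `i j` (descending in the signed directions `si, sj`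
from the middle point). -/
def Corner (S : AAString) (i j : Fin 3) (si sj : ℝ) : Prop :=
  S.k = 2 ∧
  ((IsSegA S.fst S.mid i ∧ si * S.fst i < si * S.mid i ∧
      IsSegA S.mid S.lst j ∧ sj * S.lst j < sj * S.mid j) ∨
   (IsSegA S.mid S.lst i ∧ si * S.lst i < si * S.mid i ∧
      IsSegA S.fst S.mid j ∧ sj * S.fst j < sj * S.mid j))

/-- Data at a middle (bend) point of a 2-segment string. -/
def MidData (S : AAString) (t : Pt3) : Prop :=
  S.k = 2 ∧ t = S.mid ∧ TipMate S S.fst t ∧ TipMate S S.lst t ∧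
  (segment ℝ S.fst t ∩ segment ℝ t S.lst = {t}) ∧
  (∃ a, IsSegA S.fst t a) ∧ (∃ a, IsSegA t S.lst a) ∧
  segment ℝ S.fst t ⊆ S.carrier ∧ segment ℝ t S.lst ⊆ S.carrier

lemma midData_of_not_endpoints {S : AAString} (hk : S.k ≤ 2) {t : Pt3}
    (hpt : ∃ i : Fin S.k, t = S.pts i.castSucc ∨ t = S.pts i.succ)
    (hne : t ∉ S.endpoints) : MidData S t := by
  obtain ⟨h2, htB, htm0, htmL, hcons, hax0, hax1, hsub0, hsub1⟩ := middle_struct hk hpt hne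
  have hmid : t = S.mid := htB
  exact ⟨h2, hmid, htm0, htmL, hcons,
    ⟨hax0.choose, hax0.choose_spec.1, hax0.choose_spec.2⟩,
    ⟨hax1.choose, hax1.choose_spec.1, hax1.choose_spec.2⟩, hsub0, hsub1⟩

lemma fin3 (a : Fin 3) : a = 0 ∨ a = 1 ∨ a = 2 := by fin_cases a <;> simp

/-- Analysis of the host string `w` around a landing point `t` on the top line. -/
lemma hostcase (Ψ : Fin 5 → AAString) (M M' : ℝ)
    (hk : ∀ v, (Ψ v).k ≤ 2)
    (hub : ∀ (v : Fin 5) (idx : Fin ((Ψ v).k + 1)), (Ψ v).pts idx 2 ≤ M)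
    (hub2 : ∀ (v : Fin 5) (idx : Fin ((Ψ v).k + 1)),
      (Ψ v).pts idx 2 = M → (Ψ v).pts idx 1 ≤ M')
    {w : Fin 5} {t : Pt3} (htw : t ∈ (Ψ w).carrier) (hne : t ∉ (Ψ w).endpoints)
    (ht1 : t 1 = M') (ht2 : t 2 = M) :
    (∃ i : Fin (Ψ w).k, t ∈ segment ℝ ((Ψ w).pts i.castSucc) ((Ψ w).pts i.succ) ∧
      IsSegA ((Ψ w).pts i.castSucc) ((Ψ w).pts i.succ) 0 ∧
      ((Ψ w).pts i.castSucc) 1 = M' ∧ ((Ψ w).pts i.castSucc) 2 = M ∧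
      ((Ψ w).pts i.succ) 1 = M' ∧ ((Ψ w).pts i.succ) 2 = M) ∨
    MidData (Ψ w) t := by
  obtain ⟨i, hseg⟩ := mem_carrier_iff.mp htw
  obtain ⟨a, hconst, hnd⟩ := axis_exists (Ψ w) i
  set A := (Ψ w).pts i.castSucc with hA
  set B := (Ψ w).pts i.succ with hB
  rcases fin3 a with rfl | rfl | rfl
  · -- x-segment through t
    left
    have h1 : A 1 = B 1 := hconst 1 (by decide)
    have h2 : A 2 = B 2 := hconst 2 (by decide)
    have ht1' : t 1 = A 1 := seg_coord_const hseg h1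
    have ht2' : t 2 = A 2 := seg_coord_const hseg h2
    exact ⟨i, hseg, ⟨hconst, hnd⟩, (show A 1 = M' by rw [← ht1', ht1]),
      (show A 2 = M by rw [← ht2', ht2]),
      (show B 1 = M' by rw [← h1, ← ht1', ht1]),
      (show B 2 = M by rw [← h2, ← ht2', ht2])⟩
  · -- y-segment: t is the top endpoint, so a bend
    right
    have h2 : A 2 = B 2 := hconst 2 (by decide)
    have ht2' : t 2 = A 2 := seg_coord_const hseg h2
    have hA2 : A 2 = M := by rw [← ht2', ht2]
    have hB2 : B 2 = M := by rw [← h2, hA2]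
    have hA1 : A 1 ≤ M' := hub2 w _ hA2
    have hB1 : B 1 ≤ M' := hub2 w _ hB2
    have hcase : t = A ∨ t = B := by
      rcases le_total (A 1) (B 1) with hle | hle
      · right
        have hmax : max (A 1) (B 1) = B 1 := max_eq_right hle
        have := seg_coord_le hseg 1
        rw [hmax] at this
        have htB1 : t 1 = B 1 := by rw [ht1] at this ⊢; linarith
        exact seg_eq_endpoint (by rw [segment_symm] at hseg; exact hseg) (Ne.symm hnd) htB1
      · left
        have hmax : max (A 1) (B 1) = A 1 := max_eq_left hle
        have := seg_coord_le hseg 1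
        rw [hmax] at this
        have htA1 : t 1 = A 1 := by rw [ht1] at this ⊢; linarith
        exact seg_eq_endpoint hseg hnd htA1
    apply midData_of_not_endpoints (hk w) _ hne
    rcases hcase with h | h
    · exact ⟨i, Or.inl h⟩
    · exact ⟨i, Or.inr h⟩
  · -- z-segment: t is the top endpoint, so a bend
    right
    have h1 : A 1 = B 1 := hconst 1 (by decide)
    have hA2 : A 2 ≤ M := hub w _
    have hB2 : B 2 ≤ M := hub w _
    have hcase : t = A ∨ t = B := by
      rcases le_total (A 2) (B 2) with hle | hle
      · right
        have hmax : max (A 2) (B 2) = B 2 := max_eq_right hle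
        have := seg_coord_le hseg 2
        rw [hmax] at this
        have htB2 : t 2 = B 2 := by rw [ht2] at this ⊢; linarith
        exact seg_eq_endpoint (by rw [segment_symm] at hseg; exact hseg) (Ne.symm hnd) htB2
      · left
        have hmax : max (A 2) (B 2) = A 2 := max_eq_left hle
        have := seg_coord_le hseg 2
        rw [hmax] at this
        have htA2 : t 2 = A 2 := by rw [ht2] at this ⊢; linarith
        exact seg_eq_endpoint hseg hnd htA2
    apply midData_of_not_endpoints (hk w) _ hne
    rcases hcase with h | h
    · exact ⟨i, Or.inl h⟩
    · exact ⟨i, Or.inr h⟩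

end K5

namespace K5

/-- One chain step: an x-directed tip on the top line yields a corner string or a
further x-directed tip, strictly further along. -/
lemma hop (Ψ : Fin 5 → AAString) (M M' : ℝ)
    (hk : ∀ v, (Ψ v).k ≤ 2)
    (hub : ∀ (v : Fin 5) (idx : Fin ((Ψ v).k + 1)), (Ψ v).pts idx 2 ≤ M)
    (hub2 : ∀ (v : Fin 5) (idx : Fin ((Ψ v).k + 1)),
      (Ψ v).pts idx 2 = M → (Ψ v).pts idx 1 ≤ M')
    (hland : ∀ (v : Fin 5) (t : Pt3), t ∈ (Ψ v).endpoints →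
      ∃ w, w ≠ v ∧ t ∈ (Ψ w).carrier ∧ t ∉ (Ψ w).endpoints)
    (hfin : ∀ u v : Fin 5, u ≠ v → ((Ψ u).carrier ∩ (Ψ v).carrier).Finite)
    (hnc : ¬ ∃ v, Corner (Ψ v) 1 2 1 1) :
    ∀ t m : Pt3, (t 1 = M' ∧ t 2 = M) → (m 1 = M' ∧ m 2 = M) →
    (∃ v, TipMate (Ψ v) t m) →
    ∃ t', (t' 1 = M' ∧ t' 2 = M) ∧ (∃ w, TipMate (Ψ w) t' t) ∧
      (t' 0 - t 0) * (t 0 - m 0) > 0 := by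
  intro t m ⟨ht1, ht2⟩ ⟨hm1, hm2⟩ ⟨v, htm⟩
  obtain ⟨a, hca, hna⟩ := htm.axis
  have ha0 : a = 0 := by
    rcases fin3 a with h | h | h
    · exact h
    · exfalso; rw [h] at hna; exact hna (by rw [ht1, hm1])
    · exfalso; rw [h] at hna; exact hna (by rw [ht2, hm2])
  subst ha0
  have htm0 : t 0 ≠ m 0 := hna
  have hconstm : ∀ j, j ≠ (0 : Fin 3) → t j = m j := hca
  have hsegv : segment ℝ t m ⊆ (Ψ v).carrier := by
    rw [segment_symm]; exact htm.seg_sub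
  obtain ⟨w, hwv, htw, hnew⟩ := hland v t htm.mem_endpoints
  have hfinvw : ((Ψ v).carrier ∩ (Ψ w).carrier).Finite := hfin v w hwv.symm
  have contra_with_m : ∀ X : Pt3, (∀ j, j ≠ (0:Fin 3) → t j = X j) →
      segment ℝ t X ⊆ (Ψ w).carrier → (X 0 - t 0) * (m 0 - t 0) > 0 → False := by
    intro X hcX hsX hprod
    have hinf := overlap_same_side (p := t) (q := m) (r := X) hconstm hcX
      (by nlinarith)
    have hsub : segment ℝ t m ∩ segment ℝ t X ⊆ (Ψ v).carrier ∩ (Ψ w).carrier :=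
      fun z hz => ⟨hsegv hz.1, hsX hz.2⟩
    exact hinf (hfinvw.subset hsub)
  have chain : ∀ X : Pt3, X 0 ≠ t 0 → (∀ j, j ≠ (0:Fin 3) → t j = X j) →
      segment ℝ t X ⊆ (Ψ w).carrier → TipMate (Ψ w) X t →
      (X 1 = M' ∧ X 2 = M) →
      ∃ t', (t' 1 = M' ∧ t' 2 = M) ∧ (∃ w', TipMate (Ψ w') t' t) ∧
        (t' 0 - t 0) * (t 0 - m 0) > 0 := by
    intro X hX0 hcX hsX htmX honX
    have hle : (X 0 - t 0) * (m 0 - t 0) ≤ 0 :=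
      not_lt.mp (fun h => contra_with_m X hcX hsX h)
    have hne2 : (X 0 - t 0) * (t 0 - m 0) ≠ 0 :=
      mul_ne_zero (sub_ne_zero.mpr hX0) (sub_ne_zero.mpr htm0)
    have hge : 0 ≤ (X 0 - t 0) * (t 0 - m 0) := by nlinarith
    exact ⟨X, honX, ⟨w, htmX⟩, lt_of_le_of_ne hge (Ne.symm hne2)⟩
  rcases hostcase Ψ M M' hk hub hub2 htw hnew ht1 ht2 with
    ⟨i, hseg, ⟨hconst, hnd⟩, hA1, hA2, hB1, hB2⟩ | hmidd
  · -- host x-segment A B through t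
    set A := (Ψ w).pts i.castSucc with hAdef
    set B := (Ψ w).pts i.succ with hBdef
    have hsubAB : segment ℝ A B ⊆ (Ψ w).carrier := seg_sub_carrier (Ψ w) i
    by_cases hA : t = A
    · have hi0 : (i : ℕ) ≠ 0 := by
        intro hc
        apply hnew
        rw [mem_endpoints_iff]
        exact Or.inl (by rw [hA]; exact pts_congr (Ψ w) (by simp [hc]))
      have hk2 : (Ψ w).k = 2 := by have := hk w; have := i.isLt; omega
      have hival : (i : ℕ) = 1 := by have := i.isLt; have := hk w; omega
      have htmB : TipMate (Ψ w) B t := by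
        right
        constructor
        · exact pts_congr (Ψ w) (by simp [hival, hk2])
        · rw [hA]; exact pts_congr (Ψ w) (by simp [hival, hk2])
      apply chain B
      · rw [hA]; exact Ne.symm hnd
      · intro j hj; rw [hA]; exact hconst j hj
      · intro z hz; apply hsubAB; rw [← hA]; exact hz
      · exact htmB
      · exact ⟨hB1, hB2⟩
    · by_cases hB : t = B
      · have hi1 : (i : ℕ) + 1 ≠ (Ψ w).k := by
          intro hc
          apply hnew
          rw [mem_endpoints_iff]
          exact Or.inr (by rw [hB]; exact pts_congr (Ψ w) (by simp [Fin.last, hc]))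
        have hk2 : (Ψ w).k = 2 := by have := hk w; have := i.isLt; omega
        have hival : (i : ℕ) = 0 := by have := i.isLt; omega
        have htmA : TipMate (Ψ w) A t := by
          left
          constructor
          · exact pts_congr (Ψ w) (by simp [hival])
          · rw [hB]; exact pts_congr (Ψ w) (by simp [hival])
        apply chain A
        · rw [hB]; intro hc; exact hnd hc
        · intro j hj; rw [hB]; exact (hconst j hj).symm
        · intro z hz
          apply hsubAB
          rw [hB] at hz
          rw [segment_symm] at hz
          exact hz
        · exact htmA
        · exact ⟨hA1, hA2⟩
      · exfalso
        have hinf := overlap_interior (m := m) (t := t) (A := A) (B := B)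
          hconstm hconst hnd hseg (Ne.symm htm0) hA hB
        have hsub : segment ℝ m t ∩ segment ℝ A B ⊆ (Ψ v).carrier ∩ (Ψ w).carrier := by
          intro z hz
          refine ⟨hsegv ?_, hsubAB hz.2⟩
          rw [segment_symm]
          exact hz.1
        exact hinf (hfinvw.subset hsub)
  · -- t is the bend of w
    obtain ⟨hk2, hmid, htmE, htmD, hcons, ⟨aE, hcE, hnE⟩, ⟨aD, hcD, hnD⟩, hsubE, hsubD⟩ := hmidd
    set E := (Ψ w).fst with hEdef
    set D := (Ψ w).lst with hDdef
    have hsegtE : segment ℝ t E ⊆ (Ψ w).carrier := by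
      intro z hz; apply hsubE; rw [segment_symm] at hz; exact hz
    have hE1lt : aE = 1 → E 1 < t 1 := by
      intro h; subst h
      have h2 : E 2 = t 2 := hcE 2 (by decide)
      have hle : E 1 ≤ M' := hub2 w 0 (show (Ψ w).pts 0 2 = M by
        rw [show (Ψ w).pts 0 = E from rfl, h2, ht2])
      rw [ht1]; exact lt_of_le_of_ne hle (by rw [← ht1]; exact hnE)
    have hE2lt : aE = 2 → E 2 < t 2 := by
      intro h; subst h
      have hle : E 2 ≤ M := hub w 0
      rw [ht2]; exact lt_of_le_of_ne hle (by rw [← ht2]; exact hnE)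
    have hD1lt : aD = 1 → D 1 < t 1 := by
      intro h; subst h
      have h2 : t 2 = D 2 := hcD 2 (by decide)
      have hle : D 1 ≤ M' := hub2 w (Fin.last _) (show (Ψ w).pts (Fin.last _) 2 = M by
        rw [show (Ψ w).pts (Fin.last _) = D from rfl, ← h2, ht2])
      rw [ht1]; exact lt_of_le_of_ne hle (by rw [← ht1]; exact (Ne.symm hnD))
    have hD2lt : aD = 2 → D 2 < t 2 := by
      intro h; subst h
      have hle : D 2 ≤ M := hub w (Fin.last _)
      rw [ht2]; exact lt_of_le_of_ne hle (by rw [← ht2]; exact (Ne.symm hnD))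
    have hconsfin : (segment ℝ t E ∩ segment ℝ t D).Infinite → False := by
      intro hinf
      rw [segment_symm, hcons] at hinf
      exact hinf (Set.finite_singleton t)
    rcases fin3 aE with rfl | rfl | rfl <;> rcases fin3 aD with rfl | rfl | rfl
    · -- (0,0) : impossible
      exfalso
      have hqE : ∀ j, j ≠ (0:Fin 3) → t j = E j := fun j hj => (hcE j hj).symm
      have hqD : ∀ j, j ≠ (0:Fin 3) → t j = D j := hcD
      have hop0 : (E 0 - t 0) * (D 0 - t 0) ≤ 0 := by
        by_contra hc
        push_neg at hc
        exact hconsfin (overlap_same_side (p := t) (q := E) (r := D) hqE hqD hc)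
      have hEne' : E 0 - t 0 ≠ 0 := sub_ne_zero.mpr hnE
      have hDne' : D 0 - t 0 ≠ 0 := sub_ne_zero.mpr (fun hc => hnD hc.symm)
      have hmne : m 0 - t 0 ≠ 0 := sub_ne_zero.mpr (Ne.symm htm0)
      rcases lt_or_gt_of_ne hEne' with h | h <;>
        rcases lt_or_gt_of_ne hDne' with h' | h' <;>
        rcases lt_or_gt_of_ne hmne with h'' | h'' <;>
        first
          | exact contra_with_m E hqE hsegtE (by nlinarith)
          | exact contra_with_m D hqD hsubD (by nlinarith)
          | nlinarith
    · -- (0,1) : chain to E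
      apply chain E hnE (fun j hj => (hcE j hj).symm) hsegtE htmE
      exact ⟨(hcE 1 (by decide)).trans ht1, (hcE 2 (by decide)).trans ht2⟩
    · -- (0,2) : chain to E
      apply chain E hnE (fun j hj => (hcE j hj).symm) hsegtE htmE
      exact ⟨(hcE 1 (by decide)).trans ht1, (hcE 2 (by decide)).trans ht2⟩
    · -- (1,0) : chain to D
      apply chain D (fun hc => hnD hc.symm) hcD hsubD htmD
      exact ⟨(hcD 1 (by decide)).symm.trans ht1, (hcD 2 (by decide)).symm.trans ht2⟩
    · -- (1,1) : consecutive overlap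
      exfalso
      apply hconsfin
      apply overlap_same_side (p := t) (q := E) (r := D)
        (fun j hj => (hcE j hj).symm) hcD
      have h1 := hE1lt rfl
      have h2 := hD1lt rfl
      nlinarith
    · -- (1,2) : corner!
      exfalso
      apply hnc
      refine ⟨w, hk2, Or.inl ?_⟩
      rw [← hmid]
      refine ⟨⟨hcE, hnE⟩, by simpa using hE1lt rfl, ⟨hcD, hnD⟩, by simpa using hD2lt rfl⟩
    · -- (2,0) : chain to D
      apply chain D (fun hc => hnD hc.symm) hcD hsubD htmD
      exact ⟨(hcD 1 (by decide)).symm.trans ht1, (hcD 2 (by decide)).symm.trans ht2⟩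
    · -- (2,1) : corner!
      exfalso
      apply hnc
      refine ⟨w, hk2, Or.inr ?_⟩
      rw [← hmid]
      refine ⟨⟨hcD, hnD⟩, by simpa using hD1lt rfl, ⟨hcE, hnE⟩, by simpa using hE2lt rfl⟩
    · -- (2,2) : consecutive overlap
      exfalso
      apply hconsfin
      apply overlap_same_side (p := t) (q := E) (r := D)
        (fun j hj => (hcE j hj).symm) hcD
      have h1 := hE2lt rfl
      have h2 := hD2lt rfl
      nlinarith

end K5

namespace K5

lemma tip_zero_ne {S : AAString} {t m : Pt3} (h : TipMate S t m)
    (h1 : t 1 = m 1) (h2 : t 2 = m 2) : t 0 ≠ m 0 := by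
  obtain ⟨a, hc, hn⟩ := h.axis
  rcases fin3 a with rfl | rfl | rfl
  · exact hn
  · exact absurd h1 hn
  · exact absurd h2 hn

/-- extract an x-directed arc tip from any segment of a short string. -/
lemma xtip_of_seg {S : AAString} (hk : S.k ≤ 2) (i : Fin S.k) :
    TipMate S (S.pts i.castSucc) (S.pts i.succ) ∨
    TipMate S (S.pts i.succ) (S.pts i.castSucc) := by
  have hkpos := S.k_pos
  have hival : (i : ℕ) = 0 ∨ ((i : ℕ) = 1 ∧ S.k = 2) := by
    have := i.isLt; omega
  rcases hival with h | ⟨h, h2⟩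
  · left
    exact Or.inl ⟨pts_congr S (by simp [h]), pts_congr S (by simp [h])⟩
  · right
    refine Or.inr ⟨pts_congr S (by simp [h, h2, Fin.last]), pts_congr S (by simp [h, h2])⟩

/-- A bend on the top line yields an x-tip on the line, a corner, or a contradiction. -/
lemma mid_resolve (Ψ : Fin 5 → AAString) (M M' : ℝ)
    (hub : ∀ (v : Fin 5) (idx : Fin ((Ψ v).k + 1)), (Ψ v).pts idx 2 ≤ M)
    (hub2 : ∀ (v : Fin 5) (idx : Fin ((Ψ v).k + 1)),
      (Ψ v).pts idx 2 = M → (Ψ v).pts idx 1 ≤ M')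
    (hnc : ¬ ∃ v, Corner (Ψ v) 1 2 1 1)
    {w : Fin 5} {P : Pt3} (hmd : MidData (Ψ w) P)
    (hP1 : P 1 = M') (hP2 : P 2 = M) :
    ∃ t m : Pt3, (t 1 = M' ∧ t 2 = M) ∧ (m 1 = M' ∧ m 2 = M) ∧
      ∃ u, TipMate (Ψ u) t m := by
  obtain ⟨hk2, hmid, htmE, htmD, hcons, ⟨aE, hcE, hnE⟩, ⟨aD, hcD, hnD⟩, hsubE, hsubD⟩ := hmd
  set E := (Ψ w).fst with hEdef
  set D := (Ψ w).lst with hDdef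
  have hE1lt : aE = 1 → E 1 < P 1 := by
    intro h; subst h
    have h2 : E 2 = P 2 := hcE 2 (by decide)
    have hle : E 1 ≤ M' := hub2 w 0 (show (Ψ w).pts 0 2 = M by
      rw [show (Ψ w).pts 0 = E from rfl, h2, hP2])
    rw [hP1]; exact lt_of_le_of_ne hle (by rw [← hP1]; exact hnE)
  have hE2lt : aE = 2 → E 2 < P 2 := by
    intro h; subst h
    have hle : E 2 ≤ M := hub w 0
    rw [hP2]; exact lt_of_le_of_ne hle (by rw [← hP2]; exact hnE)
  have hD1lt : aD = 1 → D 1 < P 1 := by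
    intro h; subst h
    have h2 : P 2 = D 2 := hcD 2 (by decide)
    have hle : D 1 ≤ M' := hub2 w (Fin.last _) (show (Ψ w).pts (Fin.last _) 2 = M by
      rw [show (Ψ w).pts (Fin.last _) = D from rfl, ← h2, hP2])
    rw [hP1]; exact lt_of_le_of_ne hle (by rw [← hP1]; exact (Ne.symm hnD))
  have hD2lt : aD = 2 → D 2 < P 2 := by
    intro h; subst h
    have hle : D 2 ≤ M := hub w (Fin.last _)
    rw [hP2]; exact lt_of_le_of_ne hle (by rw [← hP2]; exact (Ne.symm hnD))
  have hconsfin : (segment ℝ P E ∩ segment ℝ P D).Infinite → False := by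
    intro hinf
    rw [segment_symm, hcons] at hinf
    exact hinf (Set.finite_singleton P)
  have tipE : aE = 0 → ∃ t m : Pt3, (t 1 = M' ∧ t 2 = M) ∧ (m 1 = M' ∧ m 2 = M) ∧
      ∃ u, TipMate (Ψ u) t m := by
    intro h; subst h
    exact ⟨E, P, ⟨(hcE 1 (by decide)).trans hP1, (hcE 2 (by decide)).trans hP2⟩,
      ⟨hP1, hP2⟩, ⟨w, htmE⟩⟩
  have tipD : aD = 0 → ∃ t m : Pt3, (t 1 = M' ∧ t 2 = M) ∧ (m 1 = M' ∧ m 2 = M) ∧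
      ∃ u, TipMate (Ψ u) t m := by
    intro h; subst h
    exact ⟨D, P, ⟨(hcD 1 (by decide)).symm.trans hP1, (hcD 2 (by decide)).symm.trans hP2⟩,
      ⟨hP1, hP2⟩, ⟨w, htmD⟩⟩
  rcases fin3 aE with rfl | rfl | rfl
  · exact tipE rfl
  · rcases fin3 aD with rfl | rfl | rfl
    · exact tipD rfl
    · exfalso
      apply hconsfin
      apply overlap_same_side (p := P) (q := E) (r := D)
        (fun j hj => (hcE j hj).symm) hcD
      have h1 := hE1lt rfl
      have h2 := hD1lt rfl
      nlinarith
    · exfalso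
      apply hnc
      refine ⟨w, hk2, Or.inl ?_⟩
      rw [← hmid]
      refine ⟨⟨hcE, hnE⟩, by simpa using hE1lt rfl, ⟨hcD, hnD⟩, by simpa using hD2lt rfl⟩
  · rcases fin3 aD with rfl | rfl | rfl
    · exact tipD rfl
    · exfalso
      apply hnc
      refine ⟨w, hk2, Or.inr ?_⟩
      rw [← hmid]
      refine ⟨⟨hcD, hnD⟩, by simpa using hD1lt rfl, ⟨hcE, hnE⟩, by simpa using hE2lt rfl⟩
    · exfalso
      apply hconsfin
      apply overlap_same_side (p := P) (q := E) (r := D)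
        (fun j hj => (hcE j hj).symm) hcD
      have h1 := hE2lt rfl
      have h2 := hD2lt rfl
      nlinarith

/-- Starting point: there is an x-directed tip on the top line (or a corner). -/
lemma start (Ψ : Fin 5 → AAString) (M M' : ℝ)
    (hk : ∀ v, (Ψ v).k ≤ 2)
    (hub : ∀ (v : Fin 5) (idx : Fin ((Ψ v).k + 1)), (Ψ v).pts idx 2 ≤ M)
    (hub2 : ∀ (v : Fin 5) (idx : Fin ((Ψ v).k + 1)),
      (Ψ v).pts idx 2 = M → (Ψ v).pts idx 1 ≤ M')
    (hland : ∀ (v : Fin 5) (t : Pt3), t ∈ (Ψ v).endpoints →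
      ∃ w, w ≠ v ∧ t ∈ (Ψ w).carrier ∧ t ∉ (Ψ w).endpoints)
    (hex : ∃ (v : Fin 5) (idx : Fin ((Ψ v).k + 1)),
      (Ψ v).pts idx 1 = M' ∧ (Ψ v).pts idx 2 = M)
    (hnc : ¬ ∃ v, Corner (Ψ v) 1 2 1 1) :
    ∃ t m : Pt3, (t 1 = M' ∧ t 2 = M) ∧ (m 1 = M' ∧ m 2 = M) ∧
      ∃ u, TipMate (Ψ u) t m := by
  obtain ⟨v, idx, hP1, hP2⟩ := hex
  set P := (Ψ v).pts idx with hPdef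
  by_cases hPe : P ∈ (Ψ v).endpoints
  · -- P is an arc endpoint; land it
    obtain ⟨w, hwv, hPw, hnew⟩ := hland v P hPe
    rcases hostcase Ψ M M' hk hub hub2 hPw hnew hP1 hP2 with
      ⟨i, hseg, hIs, hA1, hA2, hB1, hB2⟩ | hmidd
    · rcases xtip_of_seg (hk w) i with h | h
      · exact ⟨_, _, ⟨hA1, hA2⟩, ⟨hB1, hB2⟩, ⟨w, h⟩⟩
      · exact ⟨_, _, ⟨hB1, hB2⟩, ⟨hA1, hA2⟩, ⟨w, h⟩⟩
    · exact mid_resolve Ψ M M' hub hub2 hnc hmidd hP1 hP2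
  · -- P is a middle point of its own string
    have hpt : ∃ i : Fin (Ψ v).k, P = (Ψ v).pts i.castSucc ∨ P = (Ψ v).pts i.succ := by
      have hkpos := (Ψ v).k_pos
      rcases Nat.lt_or_ge (idx : ℕ) (Ψ v).k with h | h
      · exact ⟨⟨idx, h⟩, Or.inl (pts_congr (Ψ v) (by simp))⟩
      · refine ⟨⟨(Ψ v).k - 1, by omega⟩, Or.inr (pts_congr (Ψ v) ?_)⟩
        have := idx.isLt
        simp only [Fin.succ]
        omega
    have hmd := midData_of_not_endpoints (hk v) hpt hPe
    exact mid_resolve Ψ M M' hub hub2 hnc hmd hP1 hP2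

end K5

namespace K5

lemma sign_trans {a b s : ℝ} (h1 : a * b > 0) (h2 : b * s > 0) : a * s > 0 := by
  nlinarith [mul_pos h1 h2, sq_nonneg b, sq_nonneg (a*s)]

/-- The master sweep lemma: some string is a corner with axes `{y,z}` opening
downwards in both. -/
lemma sweep (Ψ : Fin 5 → AAString)
    (hk : ∀ v, (Ψ v).k ≤ 2)
    (hland : ∀ (v : Fin 5) (t : Pt3), t ∈ (Ψ v).endpoints →
      ∃ w, w ≠ v ∧ t ∈ (Ψ w).carrier ∧ t ∉ (Ψ w).endpoints)
    (hfin : ∀ u v : Fin 5, u ≠ v → ((Ψ u).carrier ∩ (Ψ v).carrier).Finite) :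
    ∃ v, Corner (Ψ v) 1 2 1 1 := by
  classical
  by_contra hnc
  set F : (Σ v : Fin 5, Fin ((Ψ v).k + 1)) → Pt3 := fun x => (Ψ x.1).pts x.2 with hF
  obtain ⟨x0, -, hx0⟩ := Finset.exists_max_image (Finset.univ : Finset (Σ v : Fin 5, Fin ((Ψ v).k + 1)))
    (fun x => F x 2) ⟨⟨0, 0⟩, Finset.mem_univ _⟩
  set M := F x0 2 with hM
  have hub : ∀ (v : Fin 5) (idx : Fin ((Ψ v).k + 1)), (Ψ v).pts idx 2 ≤ M :=
    fun v idx => hx0 ⟨v, idx⟩ (Finset.mem_univ _)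
  set s' := Finset.univ.filter (fun x => F x 2 = M) with hs'
  obtain ⟨x1, hx1mem, hx1⟩ := Finset.exists_max_image s' (fun x => F x 1)
    ⟨x0, by simp [hs', hM]⟩
  set M' := F x1 1 with hM'
  have hx1M : F x1 2 = M := by
    have := hx1mem; simp only [hs', Finset.mem_filter] at this; exact this.2
  have hub2 : ∀ (v : Fin 5) (idx : Fin ((Ψ v).k + 1)),
      (Ψ v).pts idx 2 = M → (Ψ v).pts idx 1 ≤ M' := by
    intro v idx h
    exact hx1 ⟨v, idx⟩ (by simp only [hs', Finset.mem_filter]; exact ⟨Finset.mem_univ _, h⟩)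
  have hex : ∃ (v : Fin 5) (idx : Fin ((Ψ v).k + 1)),
      (Ψ v).pts idx 1 = M' ∧ (Ψ v).pts idx 2 = M := ⟨x1.1, x1.2, rfl, hx1M⟩
  obtain ⟨t0, m0, h01, h02, h03⟩ := start Ψ M M' hk hub hub2 hland hex hnc
  -- the chain
  set Q := {q : Pt3 × Pt3 // (q.fst 1 = M' ∧ q.fst 2 = M) ∧ (q.snd 1 = M' ∧ q.snd 2 = M) ∧
    ∃ u, TipMate (Ψ u) q.fst q.snd} with hQ
  have step : ∀ q : Q, ∃ q' : Q, q'.val.snd = q.val.fst ∧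
      (q'.val.fst 0 - q.val.fst 0) * (q.val.fst 0 - q.val.snd 0) > 0 := by
    rintro ⟨⟨t, m⟩, h1, h2, h3⟩
    obtain ⟨t', ht', hw', hgt⟩ := hop Ψ M M' hk hub hub2 hland hfin hnc t m h1 h2 h3
    exact ⟨⟨(t', t), ht', h1, hw'⟩, rfl, hgt⟩
  set q0 : Q := ⟨(t0, m0), h01, h02, h03⟩ with hq0
  set g : ℕ → Q := fun n => Nat.rec q0 (fun _ q => (step q).choose) n with hg
  have hgs : ∀ n, g (n + 1) = (step (g n)).choose := fun n => rfl
  have hspec : ∀ n, (g (n+1)).val.snd = (g n).val.fst ∧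
      ((g (n+1)).val.fst 0 - (g n).val.fst 0) *
        ((g n).val.fst 0 - (g n).val.snd 0) > 0 := by
    intro n; rw [hgs n]; exact (step (g n)).choose_spec
  set s : ℝ := (g 0).val.fst 0 - (g 0).val.snd 0 with hsdef
  have hs0 : s ≠ 0 := by
    obtain ⟨hA, hB, u, htm⟩ := (g 0).prop
    have hne := tip_zero_ne htm (by rw [hA.1, hB.1]) (by rw [hA.2, hB.2])
    rw [hsdef]
    exact sub_ne_zero.mpr hne
  have J : ∀ n, ((g n).val.fst 0 - (g n).val.snd 0) * s > 0 := by
    intro n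
    induction n with
    | zero =>
      have : ((g 0).val.fst 0 - (g 0).val.snd 0) = s := rfl
      rw [this]
      exact mul_self_pos.mpr hs0
    | succ n ih =>
      have h1 := (hspec n).2
      have h2 := (hspec n).1
      rw [h2]
      exact sign_trans h1 ih
  have K : ∀ n, ((g (n+1)).val.fst 0 - (g n).val.fst 0) * s > 0 := by
    intro n
    have := J (n+1)
    rw [(hspec n).1] at this
    exact this
  have hmono : StrictMono (fun n => s * (g n).val.fst 0) :=
    strictMono_nat_of_lt_succ (fun n => by nlinarith [K n])
  have htpinj : Function.Injective (fun n => (g n).val.fst) := by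
    intro a b hab
    simp only at hab
    apply hmono.injective
    show s * (g a).val.fst 0 = s * (g b).val.fst 0
    rw [hab]
  have hsub : Set.range (fun n => (g n).val.fst) ⊆ Set.range F := by
    rintro _ ⟨n, rfl⟩
    obtain ⟨u, htm⟩ := (g n).prop.2.2
    rcases htm with ⟨h1, _⟩ | ⟨h1, _⟩
    · exact ⟨⟨u, 0⟩, h1.symm⟩
    · exact ⟨⟨u, Fin.last _⟩, h1.symm⟩
  exact (Set.infinite_range_of_injective htpinj) ((Set.finite_range F).subset hsub)

end K5

/-! ### Transforms by signed coordinate permutations -/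

namespace K5

def emap (π : Equiv.Perm (Fin 3)) (sg : Fin 3 → ℝ) (p : Pt3) : Pt3 :=
  fun i => sg i * p (π i)

variable {π : Equiv.Perm (Fin 3)} {sg : Fin 3 → ℝ}

lemma emap_inj (hs : ∀ i, sg i ≠ 0) : Function.Injective (emap π sg) := by
  intro p q h
  funext j
  have h' := congrFun h (π.symm j)
  simp only [emap, Equiv.apply_symm_apply] at h'
  exact mul_left_cancel₀ (hs _) h'

lemma emap_combo (u v : ℝ) (a b : Pt3) :
    emap π sg (u • a + v • b) = u • emap π sg a + v • emap π sg b := by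
  funext i
  simp only [emap, Pi.add_apply, Pi.smul_apply, smul_eq_mul]
  ring

lemma emap_mem_segment {a b p : Pt3} (h : p ∈ segment ℝ a b) :
    emap π sg p ∈ segment ℝ (emap π sg a) (emap π sg b) := by
  obtain ⟨u, v, hu, hv, huv, rfl⟩ := h
  exact ⟨u, v, hu, hv, huv, (emap_combo u v a b).symm⟩

lemma emap_segment (a b : Pt3) :
    segment ℝ (emap π sg a) (emap π sg b) = emap π sg '' segment ℝ a b := by
  ext y
  constructor
  · rintro ⟨u, v, hu, hv, huv, rfl⟩
    exact ⟨u • a + v • b, ⟨u, v, hu, hv, huv, rfl⟩, emap_combo u v a b⟩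
  · rintro ⟨x, hx, rfl⟩
    exact emap_mem_segment hx

lemma emap_axisParallel {v : Pt3} (h : AxisParallel v) : AxisParallel (emap π sg v) := by
  obtain ⟨i, hi⟩ := h
  refine ⟨π.symm i, fun j hj => ?_⟩
  have : π j ≠ i := fun hc => hj (by rw [← hc, Equiv.symm_apply_apply])
  simp [emap, hi (π j) this]

lemma emap_sub (a b : Pt3) : emap π sg a - emap π sg b = emap π sg (a - b) := by
  funext i
  simp only [emap, Pi.sub_apply]
  ring

/-- transformed string -/
def tstring (π : Equiv.Perm (Fin 3)) (sg : Fin 3 → ℝ) (hs : ∀ i, sg i ≠ 0)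
    (S : AAString) : AAString where
  k := S.k
  pts := fun i => emap π sg (S.pts i)
  k_pos := S.k_pos
  consec_ne := fun i h => S.consec_ne i (emap_inj hs h)
  axis := fun i => by
    rw [emap_sub]
    exact emap_axisParallel (S.axis i)
  simple_consec := fun i j hij => by
    rw [emap_segment, emap_segment, ← Set.image_inter (emap_inj hs),
      S.simple_consec i j hij, Set.image_singleton]
  simple_far := fun i j hij => by
    rw [emap_segment, emap_segment, ← Set.image_inter (emap_inj hs),
      S.simple_far i j hij, Set.image_empty]

lemma tstring_carrier (hs : ∀ i, sg i ≠ 0) (S : AAString) :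
    (tstring π sg hs S).carrier = emap π sg '' S.carrier := by
  unfold AAString.carrier
  rw [Set.image_iUnion]
  exact Set.iUnion_congr (fun i => emap_segment _ _)

lemma tstring_endpoints (hs : ∀ i, sg i ≠ 0) (S : AAString) :
    (tstring π sg hs S).endpoints = emap π sg '' S.endpoints := by
  unfold AAString.endpoints
  rw [Set.image_insert_eq, Set.image_singleton]
  rfl

/-- unique axis of a nondegenerate axis segment -/
lemma isSegA_unique {A B : Pt3} {a b : Fin 3} (h : IsSegA A B a) (h' : IsSegA A B b) :
    a = b := by
  by_contra hc
  apply h.2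
  have := h'.1 a (Ne.symm (fun hcc => hc hcc.symm))
  exact this

lemma isSegA_emap {A B : Pt3} {a : Fin 3} (hs : ∀ i, sg i ≠ 0) :
    IsSegA (emap π sg A) (emap π sg B) a ↔ IsSegA A B (π a) := by
  constructor
  · rintro ⟨hc, hn⟩
    constructor
    · intro j hj
      have hja : π.symm j ≠ a := fun hcc => hj (by rw [← hcc, Equiv.apply_symm_apply])
      have := hc (π.symm j) hja
      simp only [emap, Equiv.apply_symm_apply] at this
      exact mul_left_cancel₀ (hs _) this
    · intro hcc
      exact hn (by simp only [emap, hcc])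
  · rintro ⟨hc, hn⟩
    constructor
    · intro j hj
      have : π j ≠ π a := fun hcc => hj (π.injective hcc)
      simp only [emap, hc (π j) this]
    · intro hcc
      simp only [emap] at hcc
      exact hn (mul_left_cancel₀ (hs _) hcc)

lemma corner_back (hs : ∀ i, sg i ≠ 0) {S : AAString} {i j : Fin 3}
    (h : Corner (tstring π sg hs S) i j 1 1) :
    Corner S (π i) (π j) (sg i) (sg j) := by
  obtain ⟨hk2, hd⟩ := h
  have hfst : (tstring π sg hs S).fst = emap π sg S.fst := rfl
  have hmid : (tstring π sg hs S).mid = emap π sg S.mid := rfl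
  have hlst : (tstring π sg hs S).lst = emap π sg S.lst := rfl
  refine ⟨hk2, ?_⟩
  rcases hd with ⟨hs1, hl1, hs2, hl2⟩ | ⟨hs1, hl1, hs2, hl2⟩
  · rw [hfst, hmid] at hs1 hl1
    rw [hmid, hlst] at hs2 hl2
    left
    refine ⟨(isSegA_emap hs).mp hs1, ?_, (isSegA_emap hs).mp hs2, ?_⟩
    · simpa [emap] using hl1
    · simpa [emap] using hl2
  · rw [hmid, hlst] at hs1 hl1
    rw [hfst, hmid] at hs2 hl2
    right
    refine ⟨(isSegA_emap hs).mp hs1, ?_, (isSegA_emap hs).mp hs2, ?_⟩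
    · simpa [emap] using hl1
    · simpa [emap] using hl2

/-- two corner certificates with the same axes but opposite signs conflict -/
lemma corner_conflict {S : AAString} {i j : Fin 3} (hij : i ≠ j) {si sj si' sj' : ℝ}
    (h : Corner S i j si sj) (h' : Corner S i j si' sj')
    (hcon : (si + si' = 0 ∧ si ≠ 0) ∨ (sj + sj' = 0 ∧ sj ≠ 0)) : False := by
  obtain ⟨-, hd⟩ := h
  obtain ⟨-, hd'⟩ := h'
  rcases hd with ⟨hs1, hl1, hs2, hl2⟩ | ⟨hs1, hl1, hs2, hl2⟩ <;>
    rcases hd' with ⟨hs1', hl1', hs2', hl2'⟩ | ⟨hs1', hl1', hs2', hl2'⟩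
  · rcases hcon with ⟨hsum, hne⟩ | ⟨hsum, hne⟩
    · have hsi : si' = -si := by linarith
      rw [hsi] at hl1'
      rcases lt_or_gt_of_ne hne with h | h <;> nlinarith
    · have hsj : sj' = -sj := by linarith
      rw [hsj] at hl2'
      rcases lt_or_gt_of_ne hne with h | h <;> nlinarith
  · exact hij (isSegA_unique hs1 hs2')
  · exact hij (isSegA_unique hs1' hs2)
  · rcases hcon with ⟨hsum, hne⟩ | ⟨hsum, hne⟩
    · have hsi : si' = -si := by linarith
      rw [hsi] at hl1'
      rcases lt_or_gt_of_ne hne with h | h <;> nlinarith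
    · have hsj : sj' = -sj := by linarith
      rw [hsj] at hl2'
      rcases lt_or_gt_of_ne hne with h | h <;> nlinarith

/-- corner certificates with different axis pairs conflict -/
lemma corner_cross {S : AAString} {si sj si' sj' : ℝ}
    (h : Corner S 1 2 si sj) (h' : Corner S 0 2 si' sj') : False := by
  obtain ⟨-, hd⟩ := h
  obtain ⟨-, hd'⟩ := h'
  rcases hd with ⟨hs1, -, hs2, -⟩ | ⟨hs1, -, hs2, -⟩ <;>
    rcases hd' with ⟨hs1', -, hs2', -⟩ | ⟨hs1', -, hs2', -⟩
  · exact absurd (isSegA_unique hs1 hs1') (by decide)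
  · exact absurd (isSegA_unique hs1 hs2') (by decide)
  · exact absurd (isSegA_unique hs2 hs1') (by decide)
  · exact absurd (isSegA_unique hs1 hs1') (by decide)

end K5

namespace K5

lemma corner_from (Ψ : Fin 5 → AAString)
    (hk : ∀ v, (Ψ v).k ≤ 2)
    (hland : ∀ (v : Fin 5) (t : Pt3), t ∈ (Ψ v).endpoints →
      ∃ w, w ≠ v ∧ t ∈ (Ψ w).carrier ∧ t ∉ (Ψ w).endpoints)
    (hfin : ∀ u v : Fin 5, u ≠ v → ((Ψ u).carrier ∩ (Ψ v).carrier).Finite)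
    (π : Equiv.Perm (Fin 3)) (sg : Fin 3 → ℝ) (hs : ∀ i, sg i ≠ 0) :
    ∃ v, Corner (Ψ v) (π 1) (π 2) (sg 1) (sg 2) := by
  set Ψ' : Fin 5 → AAString := fun v => tstring π sg hs (Ψ v) with hΨ'
  have hk' : ∀ v, (Ψ' v).k ≤ 2 := hk
  have hland' : ∀ (v : Fin 5) (t : Pt3), t ∈ (Ψ' v).endpoints →
      ∃ w, w ≠ v ∧ t ∈ (Ψ' w).carrier ∧ t ∉ (Ψ' w).endpoints := by
    intro v t ht
    rw [hΨ'] at ht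
    simp only at ht
    rw [tstring_endpoints] at ht
    obtain ⟨y, hy, rfl⟩ := ht
    obtain ⟨w, hwv, hyw, hynew⟩ := hland v y hy
    refine ⟨w, hwv, ?_, ?_⟩
    · rw [hΨ']
      simp only
      rw [tstring_carrier]
      exact ⟨y, hyw, rfl⟩
    · intro hc
      rw [hΨ'] at hc
      simp only at hc
      rw [tstring_endpoints] at hc
      obtain ⟨z, hz, hze⟩ := hc
      rw [emap_inj hs hze] at hz
      exact hynew hz
  have hfin' : ∀ u v : Fin 5, u ≠ v → ((Ψ' u).carrier ∩ (Ψ' v).carrier).Finite := by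
    intro u v h
    rw [hΨ']
    simp only
    rw [tstring_carrier, tstring_carrier, ← Set.image_inter (emap_inj hs)]
    exact (hfin u v h).image _
  obtain ⟨v, hc⟩ := sweep Ψ' hk' hland' hfin'
  exact ⟨v, corner_back hs hc⟩

end K5

/-- The complete graph `K₅` admits no string contact representation in ℝ³ in which
every string is a `B₁`-string (an `L`-shape). -/
theorem K5_no_LContactRep :
    ¬ ∃ Ψ : Fin 5 → AAString, IsStringContactRep (⊤ : SimpleGraph (Fin 5)) Ψ ∧
      ∀ v : Fin 5, (Ψ v).bends ≤ 1 := by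
  rintro ⟨Ψ, hrep, hbend⟩
  have hk : ∀ v, (Ψ v).k ≤ 2 := by
    intro v
    have h := hbend v
    unfold AAString.bends at h
    have := (Ψ v).k_pos
    omega
  have hland := K5.partA_land hrep
  have hfin : ∀ u v : Fin 5, u ≠ v → ((Ψ u).carrier ∩ (Ψ v).carrier).Finite :=
    fun u v h => K5.partA_fin hrep h
  have hsA : ∀ i : Fin 3, (![1,1,1] : Fin 3 → ℝ) i ≠ 0 := by
    intro i; fin_cases i <;> norm_num
  have hsB : ∀ i : Fin 3, (![1,1,-1] : Fin 3 → ℝ) i ≠ 0 := by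
    intro i; fin_cases i <;> norm_num
  have hsC : ∀ i : Fin 3, (![1,-1,1] : Fin 3 → ℝ) i ≠ 0 := by
    intro i; fin_cases i <;> norm_num
  have hsD : ∀ i : Fin 3, (![1,-1,-1] : Fin 3 → ℝ) i ≠ 0 := by
    intro i; fin_cases i <;> norm_num
  obtain ⟨v1, hc1⟩ := K5.corner_from Ψ hk hland hfin (Equiv.refl _) ![1,1,1] hsA
  obtain ⟨v2, hc2⟩ := K5.corner_from Ψ hk hland hfin (Equiv.refl _) ![1,1,-1] hsB
  obtain ⟨v3, hc3⟩ := K5.corner_from Ψ hk hland hfin (Equiv.refl _) ![1,-1,1] hsC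
  obtain ⟨v4, hc4⟩ := K5.corner_from Ψ hk hland hfin (Equiv.refl _) ![1,-1,-1] hsD
  obtain ⟨v5, hc5⟩ := K5.corner_from Ψ hk hland hfin (Equiv.swap 0 1) ![1,1,1] hsA
  obtain ⟨v6, hc6⟩ := K5.corner_from Ψ hk hland hfin (Equiv.swap 0 1) ![1,-1,-1] hsD
  have hc1' : K5.Corner (Ψ v1) 1 2 1 1 := by simpa using hc1
  have hc2' : K5.Corner (Ψ v2) 1 2 1 (-1) := by simpa using hc2
  have hc3' : K5.Corner (Ψ v3) 1 2 (-1) 1 := by simpa using hc3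
  have hc4' : K5.Corner (Ψ v4) 1 2 (-1) (-1) := by simpa using hc4
  have hc5' : K5.Corner (Ψ v5) 0 2 1 1 := by
    have h12 : (Equiv.swap (0 : Fin 3) 1) 1 = 0 := by decide
    have h22 : (Equiv.swap (0 : Fin 3) 1) 2 = 2 := by decide
    rw [h12, h22] at hc5
    simpa using hc5
  have hc6' : K5.Corner (Ψ v6) 0 2 (-1) (-1) := by
    have h12 : (Equiv.swap (0 : Fin 3) 1) 1 = 0 := by decide
    have h22 : (Equiv.swap (0 : Fin 3) 1) 2 = 2 := by decide
    rw [h12, h22] at hc6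
    simpa using hc6
  have ne12 : v1 ≠ v2 := fun h =>
    K5.corner_conflict (by decide) hc1' (by rw [h]; exact hc2') (Or.inr (by norm_num))
  have ne13 : v1 ≠ v3 := fun h =>
    K5.corner_conflict (by decide) hc1' (by rw [h]; exact hc3') (Or.inl (by norm_num))
  have ne14 : v1 ≠ v4 := fun h =>
    K5.corner_conflict (by decide) hc1' (by rw [h]; exact hc4') (Or.inl (by norm_num))
  have ne23 : v2 ≠ v3 := fun h =>
    K5.corner_conflict (by decide) hc2' (by rw [h]; exact hc3') (Or.inl (by norm_num))
  have ne24 : v2 ≠ v4 := fun h =>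
    K5.corner_conflict (by decide) hc2' (by rw [h]; exact hc4') (Or.inl (by norm_num))
  have ne34 : v3 ≠ v4 := fun h =>
    K5.corner_conflict (by decide) hc3' (by rw [h]; exact hc4') (Or.inr (by norm_num))
  have ne56 : v5 ≠ v6 := fun h =>
    K5.corner_conflict (by decide) hc5' (by rw [h]; exact hc6') (Or.inl (by norm_num))
  have ne15 : v1 ≠ v5 := fun h => K5.corner_cross hc1' (by rw [h]; exact hc5')
  have ne16 : v1 ≠ v6 := fun h => K5.corner_cross hc1' (by rw [h]; exact hc6')
  have ne25 : v2 ≠ v5 := fun h => K5.corner_cross hc2' (by rw [h]; exact hc5')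
  have ne26 : v2 ≠ v6 := fun h => K5.corner_cross hc2' (by rw [h]; exact hc6')
  have ne35 : v3 ≠ v5 := fun h => K5.corner_cross hc3' (by rw [h]; exact hc5')
  have ne36 : v3 ≠ v6 := fun h => K5.corner_cross hc3' (by rw [h]; exact hc6')
  have ne45 : v4 ≠ v5 := fun h => K5.corner_cross hc4' (by rw [h]; exact hc5')
  have ne46 : v4 ≠ v6 := fun h => K5.corner_cross hc4' (by rw [h]; exact hc6')
  obtain ⟨a, b, hab, heq⟩ := Fintype.exists_ne_map_eq_of_card_lt
    (![v1, v2, v3, v4, v5, v6] : Fin 6 → Fin 5) (by norm_num)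
  fin_cases a <;> fin_cases b <;>
    first
      | exact hab rfl
      | exact ne12 heq
      | exact ne12 heq.symm
      | exact ne13 heq
      | exact ne13 heq.symm
      | exact ne14 heq
      | exact ne14 heq.symm
      | exact ne15 heq
      | exact ne15 heq.symm
      | exact ne16 heq
      | exact ne16 heq.symm
      | exact ne23 heq
      | exact ne23 heq.symm
      | exact ne24 heq
      | exact ne24 heq.symm
      | exact ne25 heq
      | exact ne25 heq.symm
      | exact ne26 heq
      | exact ne26 heq.symm
      | exact ne34 heq
      | exact ne34 heq.symm
      | exact ne35 heq
      | exact ne35 heq.symm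
      | exact ne36 heq
      | exact ne36 heq.symm
      | exact ne45 heq
      | exact ne45 heq.symm
      | exact ne46 heq
      | exact ne46 heq.symm
      | exact ne56 heq
      | exact ne56 heq.symm
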